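/- arXiv:1107.4751 — 2 statements merged into one kernel-verified Lean document; each statement's English description precedes it below -/
import Mathlib

section
/- Define the untyped lambda calculus as the nested datatype ULC : Type → Type with constructors Var : V → ULC V, Abs : ULC (Option V) → ULC V, and App : ULC V → ULC V → ULC V. Define renaming rename : (V → W) → ULC V → ULC W and simultaneous substitution bind : (V → ULC W) → ULC V → ULC W by structural recursion, where under an Abs a substitution f : V → ULC W is lifted to Option V → ULC (Option W) by sending the new variable to Var none and v to rename some (f v). Then (ULC, Var, bind) satisfies the monad laws: bind f (Var v) = f v; bind Var t = t; and bind g (bind f t) = bind (fun v => bind g (f v)) t, for all t : ULC V, f : V → ULC W, g : W → ULC X. -/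
/-- Untyped lambda calculus as a nested datatype: the body of an abstraction lives in
the context extended by one fresh variable (`Option V`). -/
inductive ULC : Type → Type 1
  | Var {V : Type} : V → ULC V
  | Abs {V : Type} : ULC (Option V) → ULC V
  | App {V : Type} : ULC V → ULC V → ULC V

/-- Renaming of free variables. -/
def ULC.rename : {V W : Type} → (V → W) → ULC V → ULC W
  | _, _, f, .Var v => .Var (f v)
  | _, _, f, .Abs t => .Abs (t.rename (Option.map f))
  | _, _, f, .App s t => .App (s.rename f) (t.rename f)

/-- Lifting a substitution under a binder: the new variable is sent to itself, and the
image of an old variable is weakened. -/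
def ULC.lift {V W : Type} (f : V → ULC W) : Option V → ULC (Option W)
  | none => .Var none
  | some v => (f v).rename some

/-- Simultaneous substitution. -/
def ULC.bind : {V W : Type} → (V → ULC W) → ULC V → ULC W
  | _, _, f, .Var v => f v
  | _, _, f, .Abs t => .Abs (t.bind (ULC.lift f))
  | _, _, f, .App s t => .App (s.bind f) (t.bind f)

theorem ULC.rename_rename : ∀ {V W X : Type} (t : ULC V) (f : V → W) (g : W → X),
    (t.rename f).rename g = t.rename (fun v => g (f v))
  | _, _, _, .Var v, _, _ => rfl
  | _, _, _, .Abs t, f, g => by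
      have h : Option.map (fun v => g (f v)) = fun v => Option.map g (Option.map f v) := by
        funext v; cases v <;> rfl
      simp only [rename, rename_rename t, h]
  | _, _, _, .App s t, f, g => by simp only [rename, rename_rename s, rename_rename t]

theorem ULC.bind_rename : ∀ {V W X : Type} (t : ULC V) (f : V → W) (g : W → ULC X),
    (t.rename f).bind g = t.bind (fun v => g (f v))
  | _, _, _, .Var v, _, _ => rfl
  | _, _, _, .Abs t, f, g => by
      have h : ULC.lift (fun v => g (f v)) = fun v => ULC.lift g (Option.map f v) := by
        funext v; cases v <;> rfl
      simp only [rename, bind, bind_rename t, h]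
  | _, _, _, .App s t, f, g => by simp only [rename, bind, bind_rename s, bind_rename t]

theorem ULC.rename_bind : ∀ {V W X : Type} (t : ULC V) (f : V → ULC W) (g : W → X),
    (t.bind f).rename g = t.bind (fun v => (f v).rename g)
  | _, _, _, .Var v, _, _ => rfl
  | _, _, _, .Abs t, f, g => by
      have h : ULC.lift (fun v => (f v).rename g) = fun v => (ULC.lift f v).rename (Option.map g) := by
        funext v; cases v with
        | none => rfl
        | some v => simp [lift, rename_rename]
      simp only [bind, rename, rename_bind t, h]
  | _, _, _, .App s t, f, g => by simp only [rename, bind, rename_bind s, rename_bind t]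

theorem ULC.bind_var : ∀ {V : Type} (t : ULC V), t.bind .Var = t
  | _, .Var v => rfl
  | V, .Abs t => by
      have h : ULC.lift (ULC.Var (V := V)) = ULC.Var (V := Option V) := by
        funext v; cases v <;> rfl
      simp only [bind, h, bind_var t]
  | _, .App s t => by simp only [bind, bind_var s, bind_var t]

theorem ULC.bind_bind : ∀ {V W X : Type} (t : ULC V) (f : V → ULC W) (g : W → ULC X),
    (t.bind f).bind g = t.bind (fun v => (f v).bind g)
  | _, _, _, .Var v, _, _ => rfl
  | _, _, _, .Abs t, f, g => by
      have h : ULC.lift (fun v => (f v).bind g) = fun v => (ULC.lift f v).bind (ULC.lift g) := by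
        funext v; cases v with
        | none => rfl
        | some v => simp [lift, bind_rename, rename_bind]
      simp only [bind, bind_bind t, h]
  | _, _, _, .App s t, f, g => by simp only [bind, bind_bind s, bind_bind t]

/-- `(ULC, Var, bind)` satisfies the three monad laws. -/
theorem ULC.monad_laws :
    (∀ {V W : Type} (f : V → ULC W) (v : V), ULC.bind f (.Var v) = f v) ∧
    (∀ {V : Type} (t : ULC V), ULC.bind .Var t = t) ∧
    (∀ {V W X : Type} (t : ULC V) (f : V → ULC W) (g : W → ULC X),
      ULC.bind g (ULC.bind f t) = ULC.bind (fun v => ULC.bind g (f v)) t) := by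
  exact ⟨fun f v => rfl, fun t => ULC.bind_var t, fun t f g => ULC.bind_bind t f g⟩
end

section
/- Define a PCF representation to be a tuple consisting of: a type Sorts with a binary operation ⇒ and constants Bool and Nat; a monad P on the category [Sorts, Type] of Sorts-indexed families of types; and P-module morphisms app_{u,v} : [P]_{u⇒v} × [P]_u → [P]_v, abs_{u,v} : [P^{*u}]_v → [P]_{u⇒v}, rec_t : [P]_{t⇒t} → [P]_t for all u, v, t ∈ Sorts, together with morphisms from the terminal module: tt, ff : 1 → [P]_{Bool}, a numeral n : 1 → [P]_{Nat} for each natural number n, Succ, Pred : 1 → [P]_{Nat⇒Nat}, Zero : 1 → [P]_{Nat⇒Bool}, CondN : 1 → [P]_{Bool⇒Nat⇒Nat⇒Nat}, CondB : 1 → [P]_{Bool⇒Bool⇒Bool⇒Bool}, and bottom_t : 1 → [P]_t for each t. A morphism of PCF representations from (Sorts, P, …) to (Sorts', R, …) is a map g : Sorts → Sorts' preserving ⇒, Bool and Nat, together with a colax monad morphism f : P → R over the retyping functor ḡ, such that f commutes with each of the listed module morphisms in the evident sense (e.g., translating app of P and then applying f equals applying f to the arguments and then app of R at the translated sorts, modulo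 the canonical identifications). Then the category of PCF representations has an initial object, whose sorts are T_PCF ::= Nat | Bool | T_PCF ⇒ T_PCF and whose monad is the intrinsically typed PCF term monad with its canonical representation structure given by the syntactic constructors. -/
open CategoryTheory

/-! Basic constructions on sorted families of types. -/

/-- The context `V` extended by one fresh variable of sort `u`. -/
def extC {T : Type} (V : T → Type) (u : T) : T → Type :=
  fun t => V t ⊕ PLift (t = u)

/-- Functorial action of context extension. -/
def extCMap {T : Type} {V W : T → Type} (f : V ⟶ W) (u : T) :
    extC V u ⟶ extC W u :=
  fun t => TypeCat.ofHom fun x => x.elim (fun v => Sum.inl (f t v)) Sum.inr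

/-- Object part of the retyping functor along `g : T → T'`. -/
def retypeObj {T T' : Type} (g : T → T') (V : T → Type) : T' → Type :=
  fun t' => Σ t : {t : T // g t = t'}, V t.1

/-- Morphism part of the retyping functor along `g : T → T'`. -/
def retypeMap {T T' : Type} (g : T → T') {V W : T → Type} (f : V ⟶ W) :
    retypeObj g V ⟶ retypeObj g W :=
  fun _ => TypeCat.ofHom fun p => ⟨p.1, f p.1.1 p.2⟩

/-- The colax structure of context extension over a monad `P`:
`(P V)^{*u} ⟶ P (V^{*u})`. -/
def gammaC {T : Type} (P : CategoryTheory.Monad (T → Type)) (u : T)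
    (V : T → Type) : extC (P.obj V) u ⟶ P.obj (extC V u) :=
  fun t => TypeCat.ofHom fun x =>
    x.elim (fun p => P.map (fun _ => TypeCat.ofHom fun v => (Sum.inl v : extC V u _)) t p)
      (fun h => P.η.app (extC V u) t (Sum.inr h))

/-- The canonical identification `ḡ(V^{*u}) ⟶ (ḡ V)^{*g u}`: retyping commutes with
context extension. -/
def dC {T T' : Type} (g : T → T') (V : T → Type) (u : T) :
    retypeObj g (extC V u) ⟶ extC (retypeObj g V) (g u) :=
  fun _ => TypeCat.ofHom fun p =>
    match p with
    | ⟨⟨t, ht⟩, Sum.inl v⟩ => Sum.inl ⟨⟨t, ht⟩, v⟩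
    | ⟨⟨t, ht⟩, Sum.inr h⟩ => Sum.inr ⟨by rw [← ht]; exact congrArg g h.down⟩

/-- A representation of the typed signature of PCF over a fixed sort structure
`(Sorts, ⇒, Bool, Nat)`: a monad `P` on `[Sorts, Type]` together with module
morphisms representing the arities of PCF. -/
structure PCFRepOn (Sorts : Type) (arr : Sorts → Sorts → Sorts)
    (bool : Sorts) (nat : Sorts) where
  P : CategoryTheory.Monad (Sorts → Type)
  /-- application, `[P]_{u⇒v} × [P]_u → [P]_v` -/
  app : ∀ (u v : Sorts) (V : Sorts → Type), P.obj V (arr u v) → P.obj V u → P.obj V v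
  app_natural : ∀ (u v : Sorts) {V W : Sorts → Type} (f : V ⟶ W)
      (a : P.obj V (arr u v)) (b : P.obj V u),
      app u v W (P.map f (arr u v) a) (P.map f u b) = P.map f v (app u v V a b)
  app_mod : ∀ (u v : Sorts) (V : Sorts → Type)
      (a : P.obj (P.obj V) (arr u v)) (b : P.obj (P.obj V) u),
      app u v V (P.μ.app V (arr u v) a) (P.μ.app V u b) =
        P.μ.app V v (app u v (P.obj V) a b)
  /-- abstraction, `[P^{*u}]_v → [P]_{u⇒v}` -/
  abs : ∀ (u v : Sorts) (V : Sorts → Type), P.obj (extC V u) v → P.obj V (arr u v)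
  abs_natural : ∀ (u v : Sorts) {V W : Sorts → Type} (f : V ⟶ W)
      (m : P.obj (extC V u) v),
      abs u v W (P.map (extCMap f u) v m) = P.map f (arr u v) (abs u v V m)
  abs_mod : ∀ (u v : Sorts) (V : Sorts → Type) (m : P.obj (extC (P.obj V) u) v),
      abs u v V (P.μ.app (extC V u) v (P.map (gammaC P u V) v m)) =
        P.μ.app V (arr u v) (abs u v (P.obj V) m)
  /-- fixed-point operator, `[P]_{t⇒t} → [P]_t` -/
  fixp : ∀ (t : Sorts) (V : Sorts → Type), P.obj V (arr t t) → P.obj V t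
  fixp_natural : ∀ (t : Sorts) {V W : Sorts → Type} (f : V ⟶ W)
      (m : P.obj V (arr t t)),
      fixp t W (P.map f (arr t t) m) = P.map f t (fixp t V m)
  fixp_mod : ∀ (t : Sorts) (V : Sorts → Type) (m : P.obj (P.obj V) (arr t t)),
      fixp t V (P.μ.app V (arr t t) m) = P.μ.app V t (fixp t (P.obj V) m)
  /-- the constants, as morphisms from the terminal module -/
  tt : ∀ V : Sorts → Type, P.obj V bool
  tt_natural : ∀ {V W : Sorts → Type} (f : V ⟶ W), P.map f bool (tt V) = tt W
  tt_mod : ∀ V : Sorts → Type, P.μ.app V bool (tt (P.obj V)) = tt V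
  ff : ∀ V : Sorts → Type, P.obj V bool
  ff_natural : ∀ {V W : Sorts → Type} (f : V ⟶ W), P.map f bool (ff V) = ff W
  ff_mod : ∀ V : Sorts → Type, P.μ.app V bool (ff (P.obj V)) = ff V
  num : ∀ (_ : ℕ) (V : Sorts → Type), P.obj V nat
  num_natural : ∀ (n : ℕ) {V W : Sorts → Type} (f : V ⟶ W),
      P.map f nat (num n V) = num n W
  num_mod : ∀ (n : ℕ) (V : Sorts → Type), P.μ.app V nat (num n (P.obj V)) = num n V
  succ : ∀ V : Sorts → Type, P.obj V (arr nat nat)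
  succ_natural : ∀ {V W : Sorts → Type} (f : V ⟶ W),
      P.map f (arr nat nat) (succ V) = succ W
  succ_mod : ∀ V : Sorts → Type, P.μ.app V (arr nat nat) (succ (P.obj V)) = succ V
  pred : ∀ V : Sorts → Type, P.obj V (arr nat nat)
  pred_natural : ∀ {V W : Sorts → Type} (f : V ⟶ W),
      P.map f (arr nat nat) (pred V) = pred W
  pred_mod : ∀ V : Sorts → Type, P.μ.app V (arr nat nat) (pred (P.obj V)) = pred V
  zero : ∀ V : Sorts → Type, P.obj V (arr nat bool)
  zero_natural : ∀ {V W : Sorts → Type} (f : V ⟶ W),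
      P.map f (arr nat bool) (zero V) = zero W
  zero_mod : ∀ V : Sorts → Type, P.μ.app V (arr nat bool) (zero (P.obj V)) = zero V
  condN : ∀ V : Sorts → Type, P.obj V (arr bool (arr nat (arr nat nat)))
  condN_natural : ∀ {V W : Sorts → Type} (f : V ⟶ W),
      P.map f (arr bool (arr nat (arr nat nat))) (condN V) = condN W
  condN_mod : ∀ V : Sorts → Type,
      P.μ.app V (arr bool (arr nat (arr nat nat))) (condN (P.obj V)) = condN V
  condB : ∀ V : Sorts → Type, P.obj V (arr bool (arr bool (arr bool bool)))
  condB_natural : ∀ {V W : Sorts → Type} (f : V ⟶ W),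
      P.map f (arr bool (arr bool (arr bool bool))) (condB V) = condB W
  condB_mod : ∀ V : Sorts → Type,
      P.μ.app V (arr bool (arr bool (arr bool bool))) (condB (P.obj V)) = condB V
  bot : ∀ (t : Sorts) (V : Sorts → Type), P.obj V t
  bot_natural : ∀ (t : Sorts) {V W : Sorts → Type} (f : V ⟶ W),
      P.map f t (bot t V) = bot t W
  bot_mod : ∀ (t : Sorts) (V : Sorts → Type), P.μ.app V t (bot t (P.obj V)) = bot t V

/-- A representation of the typed signature of PCF. -/
structure PCFRep where
  Sorts : Type
  arr : Sorts → Sorts → Sorts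
  bool : Sorts
  nat : Sorts
  str : PCFRepOn Sorts arr bool nat

/-- A morphism of PCF-representations: a map of sorts preserving `⇒`, `Bool`, `Nat`,
together with a colax monad morphism over the associated retyping functor, commuting
with all the PCF operations (modulo the canonical identifications). -/
structure PCFRepHom (X Y : PCFRep) where
  g : X.Sorts → Y.Sorts
  g_arr : ∀ u v, g (X.arr u v) = Y.arr (g u) (g v)
  g_bool : g X.bool = Y.bool
  g_nat : g X.nat = Y.nat
  f : ∀ V : X.Sorts → Type,
      retypeObj g (X.str.P.obj V) ⟶ Y.str.P.obj (retypeObj g V)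
  f_natural : ∀ {V W : X.Sorts → Type} (k : V ⟶ W),
      retypeMap g (X.str.P.map k) ≫ f W = f V ≫ Y.str.P.map (retypeMap g k)
  f_unit : ∀ V : X.Sorts → Type,
      retypeMap g (X.str.P.η.app V) ≫ f V = Y.str.P.η.app (retypeObj g V)
  f_mul : ∀ V : X.Sorts → Type,
      retypeMap g (X.str.P.μ.app V) ≫ f V =
        f (X.str.P.obj V) ≫ Y.str.P.map (f V) ≫ Y.str.P.μ.app (retypeObj g V)
  app_compat : ∀ (u v : X.Sorts) (V : X.Sorts → Type)
      (a : X.str.P.obj V (X.arr u v)) (b : X.str.P.obj V u),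
      f V (g v) ⟨⟨v, rfl⟩, X.str.app u v V a b⟩ =
        Y.str.app (g u) (g v) (retypeObj g V)
          (cast (by rw [g_arr]) (f V (g (X.arr u v)) ⟨⟨X.arr u v, rfl⟩, a⟩))
          (f V (g u) ⟨⟨u, rfl⟩, b⟩)
  abs_compat : ∀ (u v : X.Sorts) (V : X.Sorts → Type)
      (m : X.str.P.obj (extC V u) v),
      f V (g (X.arr u v)) ⟨⟨X.arr u v, rfl⟩, X.str.abs u v V m⟩ =
        cast (by rw [g_arr])
          (Y.str.abs (g u) (g v) (retypeObj g V)
            (Y.str.P.map (dC g V u) (g v) (f (extC V u) (g v) ⟨⟨v, rfl⟩, m⟩)))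
  fixp_compat : ∀ (t : X.Sorts) (V : X.Sorts → Type)
      (m : X.str.P.obj V (X.arr t t)),
      f V (g t) ⟨⟨t, rfl⟩, X.str.fixp t V m⟩ =
        Y.str.fixp (g t) (retypeObj g V)
          (cast (by rw [g_arr]) (f V (g (X.arr t t)) ⟨⟨X.arr t t, rfl⟩, m⟩))
  tt_compat : ∀ V : X.Sorts → Type,
      f V (g X.bool) ⟨⟨X.bool, rfl⟩, X.str.tt V⟩ =
        cast (by rw [g_bool]) (Y.str.tt (retypeObj g V))
  ff_compat : ∀ V : X.Sorts → Type,
      f V (g X.bool) ⟨⟨X.bool, rfl⟩, X.str.ff V⟩ =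
        cast (by rw [g_bool]) (Y.str.ff (retypeObj g V))
  num_compat : ∀ (n : ℕ) (V : X.Sorts → Type),
      f V (g X.nat) ⟨⟨X.nat, rfl⟩, X.str.num n V⟩ =
        cast (by rw [g_nat]) (Y.str.num n (retypeObj g V))
  succ_compat : ∀ V : X.Sorts → Type,
      f V (g (X.arr X.nat X.nat)) ⟨⟨X.arr X.nat X.nat, rfl⟩, X.str.succ V⟩ =
        cast (by simp only [g_arr, g_nat]) (Y.str.succ (retypeObj g V))
  pred_compat : ∀ V : X.Sorts → Type,
      f V (g (X.arr X.nat X.nat)) ⟨⟨X.arr X.nat X.nat, rfl⟩, X.str.pred V⟩ =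
        cast (by simp only [g_arr, g_nat]) (Y.str.pred (retypeObj g V))
  zero_compat : ∀ V : X.Sorts → Type,
      f V (g (X.arr X.nat X.bool)) ⟨⟨X.arr X.nat X.bool, rfl⟩, X.str.zero V⟩ =
        cast (by simp only [g_arr, g_nat, g_bool]) (Y.str.zero (retypeObj g V))
  condN_compat : ∀ V : X.Sorts → Type,
      f V (g (X.arr X.bool (X.arr X.nat (X.arr X.nat X.nat))))
          ⟨⟨X.arr X.bool (X.arr X.nat (X.arr X.nat X.nat)), rfl⟩, X.str.condN V⟩ =
        cast (by simp only [g_arr, g_nat, g_bool]) (Y.str.condN (retypeObj g V))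
  condB_compat : ∀ V : X.Sorts → Type,
      f V (g (X.arr X.bool (X.arr X.bool (X.arr X.bool X.bool))))
          ⟨⟨X.arr X.bool (X.arr X.bool (X.arr X.bool X.bool)), rfl⟩, X.str.condB V⟩ =
        cast (by simp only [g_arr, g_bool]) (Y.str.condB (retypeObj g V))
  bot_compat : ∀ (t : X.Sorts) (V : X.Sorts → Type),
      f V (g t) ⟨⟨t, rfl⟩, X.str.bot t V⟩ = Y.str.bot (g t) (retypeObj g V)

/-- The types of PCF: `T_PCF ::= Nat | Bool | T_PCF ⇒ T_PCF`. -/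
inductive PcfTy : Type
  | nat : PcfTy
  | bool : PcfTy
  | arr : PcfTy → PcfTy → PcfTy

/-- Intrinsically typed PCF syntax. -/
inductive PCFTm : (PcfTy → Type) → PcfTy → Type 1
  | var {V : PcfTy → Type} {t : PcfTy} : V t → PCFTm V t
  | bot {V : PcfTy → Type} (t : PcfTy) : PCFTm V t
  | app {V : PcfTy → Type} {u v : PcfTy} :
      PCFTm V (.arr u v) → PCFTm V u → PCFTm V v
  | lam {V : PcfTy → Type} {u v : PcfTy} : PCFTm (extC V u) v → PCFTm V (.arr u v)
  | fixp {V : PcfTy → Type} {t : PcfTy} : PCFTm V (.arr t t) → PCFTm V t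
  | tt {V : PcfTy → Type} : PCFTm V .bool
  | ff {V : PcfTy → Type} : PCFTm V .bool
  | num {V : PcfTy → Type} : ℕ → PCFTm V .nat
  | succ {V : PcfTy → Type} : PCFTm V (.arr .nat .nat)
  | pred {V : PcfTy → Type} : PCFTm V (.arr .nat .nat)
  | zero {V : PcfTy → Type} : PCFTm V (.arr .nat .bool)
  | condN {V : PcfTy → Type} : PCFTm V (.arr .bool (.arr .nat (.arr .nat .nat)))
  | condB {V : PcfTy → Type} : PCFTm V (.arr .bool (.arr .bool (.arr .bool .bool)))
namespace PCFInit
open PcfTy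

/-- Iterated context extension. -/
def ctx (V : PcfTy → Type) : List PcfTy → PcfTy → Type
  | [] => V
  | u :: Γ => extC (ctx V Γ) u

/-- Intrinsically typed PCF terms over `V` in context `Γ`, as a small type. -/
inductive Tm (V : PcfTy → Type) : List PcfTy → PcfTy → Type
  | var {Γ t} : ctx V Γ t → Tm V Γ t
  | bot {Γ} (t : PcfTy) : Tm V Γ t
  | app {Γ u v} : Tm V Γ (.arr u v) → Tm V Γ u → Tm V Γ v
  | lam {Γ u v} : Tm V (u :: Γ) v → Tm V Γ (.arr u v)
  | fixp {Γ t} : Tm V Γ (.arr t t) → Tm V Γ t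
  | tt {Γ} : Tm V Γ .bool
  | ff {Γ} : Tm V Γ .bool
  | num {Γ} : ℕ → Tm V Γ .nat
  | succ {Γ} : Tm V Γ (.arr .nat .nat)
  | pred {Γ} : Tm V Γ (.arr .nat .nat)
  | zero {Γ} : Tm V Γ (.arr .nat .bool)
  | condN {Γ} : Tm V Γ (.arr .bool (.arr .nat (.arr .nat .nat)))
  | condB {Γ} : Tm V Γ (.arr .bool (.arr .bool (.arr .bool .bool)))

def liftR {V W : PcfTy → Type} {Γ Δ : List PcfTy}
    (ρ : ∀ t, ctx V Γ t → ctx W Δ t) (u : PcfTy) :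
    ∀ t, ctx V (u :: Γ) t → ctx W (u :: Δ) t :=
  fun t x => extCMap (fun t => TypeCat.ofHom (ρ t)) u t x

def rename {V W : PcfTy → Type} {Γ Δ : List PcfTy}
    (ρ : ∀ t, ctx V Γ t → ctx W Δ t) : ∀ {t}, Tm V Γ t → Tm W Δ t
  | _, .var x => .var (ρ _ x)
  | _, .bot t => .bot t
  | _, .app a b => .app (rename ρ a) (rename ρ b)
  | _, .lam (u := u) m => .lam (rename (liftR ρ u) m)
  | _, .fixp m => .fixp (rename ρ m)
  | _, .tt => .tt
  | _, .ff => .ff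
  | _, .num n => .num n
  | _, .succ => .succ
  | _, .pred => .pred
  | _, .zero => .zero
  | _, .condN => .condN
  | _, .condB => .condB

def wk {W : PcfTy → Type} {Δ : List PcfTy} (u : PcfTy) :
    ∀ t, ctx W Δ t → ctx W (u :: Δ) t :=
  fun _ x => Sum.inl x

def liftS {V W : PcfTy → Type} {Γ Δ : List PcfTy}
    (σ : ∀ t, ctx V Γ t → Tm W Δ t) (u : PcfTy) :
    ∀ t, ctx V (u :: Γ) t → Tm W (u :: Δ) t :=
  fun t x => x.elim (fun v => rename (wk u) (σ t v)) (fun h => .var (Sum.inr h))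

def subst {V W : PcfTy → Type} {Γ Δ : List PcfTy}
    (σ : ∀ t, ctx V Γ t → Tm W Δ t) : ∀ {t}, Tm V Γ t → Tm W Δ t
  | _, .var x => σ _ x
  | _, .bot t => .bot t
  | _, .app a b => .app (subst σ a) (subst σ b)
  | _, .lam (u := u) m => .lam (subst (liftS σ u) m)
  | _, .fixp m => .fixp (subst σ m)
  | _, .tt => .tt
  | _, .ff => .ff
  | _, .num n => .num n
  | _, .succ => .succ
  | _, .pred => .pred
  | _, .zero => .zero
  | _, .condN => .condN
  | _, .condB => .condB

theorem rename_congr {V W : PcfTy → Type} {Γ Δ : List PcfTy}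
    {ρ ρ' : ∀ t, ctx V Γ t → ctx W Δ t} (h : ∀ t x, ρ t x = ρ' t x)
    {t} (m : Tm V Γ t) : rename ρ m = rename ρ' m := by
  have : ρ = ρ' := funext fun t => funext (h t)
  subst this; rfl

theorem subst_congr {V W : PcfTy → Type} {Γ Δ : List PcfTy}
    {σ σ' : ∀ t, ctx V Γ t → Tm W Δ t} (h : ∀ t x, σ t x = σ' t x)
    {t} (m : Tm V Γ t) : subst σ m = subst σ' m := by
  have : σ = σ' := funext fun t => funext (h t)
  subst this; rfl

theorem rename_rename {V W U : PcfTy → Type} {Γ Δ Θ : List PcfTy}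
    (ρ : ∀ t, ctx V Γ t → ctx W Δ t) (ρ' : ∀ t, ctx W Δ t → ctx U Θ t)
    {t} (m : Tm V Γ t) :
    rename ρ' (rename ρ m) = rename (fun t x => ρ' t (ρ t x)) m := by
  induction m generalizing W U Δ Θ with
  | lam m ih =>
      show Tm.lam _ = Tm.lam _
      rw [ih]
      exact congrArg Tm.lam (rename_congr (fun t x => by cases x <;> rfl) m)
  | var x => rfl
  | app a b iha ihb => show Tm.app _ _ = Tm.app _ _; rw [iha, ihb]
  | fixp m ih => show Tm.fixp _ = Tm.fixp _; rw [ih]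
  | _ => rfl

theorem rename_id {V : PcfTy → Type} {Γ : List PcfTy}
    (ρ : ∀ t, ctx V Γ t → ctx V Γ t) (h : ∀ t x, ρ t x = x)
    {t} (m : Tm V Γ t) : rename ρ m = m := by
  induction m with
  | lam m ih =>
      refine congrArg Tm.lam (ih _ (fun t x => ?_))
      cases x with
      | inl v => show Sum.inl (ρ t v) = Sum.inl v; rw [h]
      | inr hh => rfl
  | var x => exact congrArg Tm.var (h _ x)
  | app a b iha ihb => show Tm.app _ _ = Tm.app _ _; rw [iha _ h, ihb _ h]
  | fixp m ih => show Tm.fixp _ = Tm.fixp _; rw [ih _ h]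
  | _ => rfl

theorem subst_rename {V W U : PcfTy → Type} {Γ Δ Θ : List PcfTy}
    (ρ : ∀ t, ctx V Γ t → ctx W Δ t) (σ : ∀ t, ctx W Δ t → Tm U Θ t)
    {t} (m : Tm V Γ t) :
    subst σ (rename ρ m) = subst (fun t x => σ t (ρ t x)) m := by
  induction m generalizing W U Δ Θ with
  | lam m ih =>
      show Tm.lam _ = Tm.lam _
      rw [ih]
      exact congrArg Tm.lam (subst_congr (fun t x => by cases x <;> rfl) m)
  | var x => rfl
  | app a b iha ihb => show Tm.app _ _ = Tm.app _ _; rw [iha, ihb]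
  | fixp m ih => show Tm.fixp _ = Tm.fixp _; rw [ih]
  | _ => rfl

theorem rename_subst {V W U : PcfTy → Type} {Γ Δ Θ : List PcfTy}
    (σ : ∀ t, ctx V Γ t → Tm W Δ t) (ρ : ∀ t, ctx W Δ t → ctx U Θ t)
    {t} (m : Tm V Γ t) :
    rename ρ (subst σ m) = subst (fun t x => rename ρ (σ t x)) m := by
  induction m generalizing W U Δ Θ with
  | lam m ih =>
      show Tm.lam _ = Tm.lam _
      rw [ih]
      refine congrArg Tm.lam (subst_congr (fun t x => ?_) m)
      cases x with
      | inl v =>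
          show rename _ (rename _ (σ t v)) = rename _ (rename _ (σ t v))
          rw [rename_rename, rename_rename]
          exact rename_congr (fun t x => rfl) (σ t v)
      | inr h => rfl
  | var x => rfl
  | app a b iha ihb => show Tm.app _ _ = Tm.app _ _; rw [iha, ihb]
  | fixp m ih => show Tm.fixp _ = Tm.fixp _; rw [ih]
  | _ => rfl

theorem subst_subst {V W U : PcfTy → Type} {Γ Δ Θ : List PcfTy}
    (σ : ∀ t, ctx V Γ t → Tm W Δ t) (σ' : ∀ t, ctx W Δ t → Tm U Θ t)
    {t} (m : Tm V Γ t) :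
    subst σ' (subst σ m) = subst (fun t x => subst σ' (σ t x)) m := by
  induction m generalizing W U Δ Θ with
  | lam m ih =>
      show Tm.lam _ = Tm.lam _
      rw [ih]
      refine congrArg Tm.lam (subst_congr (fun t x => ?_) m)
      cases x with
      | inl v =>
          show subst _ (rename _ (σ t v)) = rename _ (subst _ (σ t v))
          rw [subst_rename, rename_subst]
          exact subst_congr (fun t x => rfl) (σ t v)
      | inr h => rfl
  | var x => rfl
  | app a b iha ihb => show Tm.app _ _ = Tm.app _ _; rw [iha, ihb]
  | fixp m ih => show Tm.fixp _ = Tm.fixp _; rw [ih]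
  | _ => rfl

theorem subst_var {V : PcfTy → Type} {Γ : List PcfTy}
    (σ : ∀ t, ctx V Γ t → Tm V Γ t) (h : ∀ t x, σ t x = .var x)
    {t} (m : Tm V Γ t) : subst σ m = m := by
  induction m with
  | lam m ih =>
      refine congrArg Tm.lam (ih _ (fun t x => ?_))
      cases x with
      | inl v => show rename _ (σ t v) = _; rw [h]; rfl
      | inr h => rfl
  | var x => exact h _ x
  | app a b iha ihb => show Tm.app _ _ = Tm.app _ _; rw [iha _ h, ihb _ h]
  | fixp m ih => show Tm.fixp _ = Tm.fixp _; rw [ih _ h]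
  | _ => rfl

def toH {T : Type} {V W : T → Type} (f : ∀ t, V t → W t) : V ⟶ W :=
  fun t => TypeCat.ofHom (f t)

end PCFInit
namespace PCFInit

/-- Renaming at the empty context. -/
def ren0 {V W : PcfTy → Type} (f : ∀ t, V t → W t) {t} (m : Tm V [] t) : Tm W [] t :=
  rename (V := V) (W := W) (Γ := []) (Δ := []) f m

/-- Substitution at the empty context. -/
def sub0 {V W : PcfTy → Type} (σ : ∀ t, V t → Tm W [] t) {t} (m : Tm V [] t) :
    Tm W [] t :=
  subst (V := V) (W := W) (Γ := []) (Δ := []) σ m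

theorem ren0_congr {V W : PcfTy → Type} {f f' : ∀ t, V t → W t}
    (h : ∀ t x, f t x = f' t x) {t} (m : Tm V [] t) : ren0 f m = ren0 f' m :=
  rename_congr (V := V) (W := W) (Γ := []) (Δ := []) (ρ := f) (ρ' := f') h m

theorem sub0_congr {V W : PcfTy → Type} {σ σ' : ∀ t, V t → Tm W [] t}
    (h : ∀ t x, σ t x = σ' t x) {t} (m : Tm V [] t) : sub0 σ m = sub0 σ' m :=
  subst_congr (V := V) (W := W) (Γ := []) (Δ := []) (σ := σ) (σ' := σ') h m

theorem ren0_ren0 {V W U : PcfTy → Type} (f : ∀ t, V t → W t) (g : ∀ t, W t → U t)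
    {t} (m : Tm V [] t) : ren0 g (ren0 f m) = ren0 (fun t x => g t (f t x)) m :=
  rename_rename (V := V) (W := W) (U := U) (Γ := []) (Δ := []) (Θ := []) f g m

theorem ren0_id {V : PcfTy → Type} (f : ∀ t, V t → V t) (h : ∀ t x, f t x = x)
    {t} (m : Tm V [] t) : ren0 f m = m :=
  rename_id (V := V) (Γ := []) f h m

theorem sub0_ren0 {V W U : PcfTy → Type} (f : ∀ t, V t → W t)
    (σ : ∀ t, W t → Tm U [] t) {t} (m : Tm V [] t) :
    sub0 σ (ren0 f m) = sub0 (fun t x => σ t (f t x)) m :=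
  subst_rename (V := V) (W := W) (U := U) (Γ := []) (Δ := []) (Θ := []) f σ m

theorem ren0_sub0 {V W U : PcfTy → Type} (σ : ∀ t, V t → Tm W [] t)
    (f : ∀ t, W t → U t) {t} (m : Tm V [] t) :
    ren0 f (sub0 σ m) = sub0 (fun t x => ren0 f (σ t x)) m :=
  rename_subst (V := V) (W := W) (U := U) (Γ := []) (Δ := []) (Θ := []) σ f m

theorem sub0_sub0 {V W U : PcfTy → Type} (σ : ∀ t, V t → Tm W [] t)
    (σ' : ∀ t, W t → Tm U [] t) {t} (m : Tm V [] t) :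
    sub0 σ' (sub0 σ m) = sub0 (fun t x => sub0 σ' (σ t x)) m :=
  subst_subst (V := V) (W := W) (U := U) (Γ := []) (Δ := []) (Θ := []) σ σ' m

theorem sub0_var {V : PcfTy → Type} (σ : ∀ t, V t → Tm V [] t)
    (h : ∀ t x, σ t x = .var x) {t} (m : Tm V [] t) : sub0 σ m = m :=
  subst_var (V := V) (Γ := []) σ h m

def TmF : (PcfTy → Type) ⥤ (PcfTy → Type) where
  obj V := fun t => Tm V [] t
  map {V W} f := fun t => TypeCat.ofHom fun m => ren0 (fun s x => f s x) m
  map_id V := by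
    funext t; refine ConcreteCategory.hom_ext _ _ fun m => ?_
    exact ren0_id _ (fun _ _ => rfl) m
  map_comp {V W U} f g := by
    funext t; refine ConcreteCategory.hom_ext _ _ fun m => ?_
    exact (ren0_congr (f' := fun s x => g s (f s x)) (fun _ _ => rfl) m).trans
      (ren0_ren0 (fun s x => f s x) (fun s x => g s x) m).symm

def pcfMonad : CategoryTheory.Monad (PcfTy → Type) where
  toFunctor := TmF
  η :=
    { app := fun V => fun t => TypeCat.ofHom fun v => Tm.var v
      naturality := by intros V W f; funext t; refine ConcreteCategory.hom_ext _ _ fun v => ?_; rfl }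
  μ :=
    { app := fun V => fun t => TypeCat.ofHom fun m => sub0 (fun _ x => x) m
      naturality := by
        intros V W f
        funext t; refine ConcreteCategory.hom_ext _ _ fun m => ?_
        exact (sub0_ren0 _ _ m).trans
          ((sub0_congr (fun _ _ => rfl) m).trans (ren0_sub0 _ (fun s x => f s x) m).symm) }
  assoc := by
    intro V
    funext t; refine ConcreteCategory.hom_ext _ _ fun m => ?_
    exact (sub0_ren0 (fun s x => sub0 (fun _ y => y) x) _ m).trans
      (sub0_sub0 _ _ m).symm
  left_unit := by intro V; rfl
  right_unit := by
    intro V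
    funext t; refine ConcreteCategory.hom_ext _ _ fun m => ?_
    exact (sub0_ren0 (V := V) (W := fun s => Tm V [] s) (U := V)
      (fun s x => Tm.var x) (fun _ x => x) m).trans
      (sub0_var (fun t x => Tm.var x) (fun _ _ => rfl) m)

/-- Lift of a family map to extended families, at empty contexts. -/
def extR {V W : PcfTy → Type} (f : ∀ t, V t → W t) (u : PcfTy) :
    ∀ t, ctx (extC V u) [] t → ctx (extC W u) [] t :=
  fun t x => x.elim (fun v => Sum.inl (f t v)) Sum.inr

def toCtx1 {V : PcfTy → Type} {u : PcfTy} :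
    ∀ t, ctx (extC V u) [] t → ctx V [u] t := fun _ x => x

/-- Conversion `Tm (V⁺ᵘ) [] t → Tm V [u] t`. -/
def conv1 {V : PcfTy → Type} {u : PcfTy} {t : PcfTy} (m : Tm (extC V u) [] t) :
    Tm V [u] t :=
  rename (V := extC V u) (W := V) (Γ := []) (Δ := [u]) toCtx1 m

def absT {V : PcfTy → Type} {u v : PcfTy} (m : Tm (extC V u) [] v) :
    Tm V [] (.arr u v) := .lam (conv1 m)

/-- `gammaC` for the PCF monad, with an elaboration-friendly type. -/
def gam {V : PcfTy → Type} (u : PcfTy) :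
    ∀ t, extC (fun s => Tm V [] s) u t → Tm (extC V u) [] t :=
  fun t x => gammaC pcfMonad u V t x

def pcfR₀ : PCFRepOn PcfTy PcfTy.arr PcfTy.bool PcfTy.nat where
  P := pcfMonad
  app _ _ _ a b := Tm.app a b
  app_natural := by intros; rfl
  app_mod := by intros; rfl
  abs _ _ _ m := absT m
  abs_natural := by
    intro u v V W f m
    refine congrArg Tm.lam ?_
    refine (rename_rename (V := extC V u) (W := extC W u) (U := W) (Γ := [])
      (Δ := []) (Θ := [u]) (extR (fun a b => f a b) u) toCtx1 m).trans
      (Eq.trans ?_ (rename_rename (V := extC V u) (W := V) (U := W) (Γ := [])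
        (Δ := [u]) (Θ := [u]) toCtx1 (liftR (V := V) (W := W) (Γ := []) (Δ := []) (fun s x => f s x) u) m).symm)
    exact rename_congr (fun _ x => rfl) m
  abs_mod := by
    intro u v V m
    refine congrArg Tm.lam ?_
    refine Eq.trans (congrArg conv1 (sub0_ren0
      (V := extC (fun s => Tm V [] s) u) (W := fun s => Tm (extC V u) [] s)
      (U := extC V u) (gam u) (fun _ x => x) m)) ?_
    refine (rename_subst (V := extC (fun s => Tm V [] s) u) (W := extC V u)
      (U := V) (Γ := []) (Δ := []) (Θ := [u])
      (fun s x => gam u s x) toCtx1 m).trans ?_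
    refine Eq.trans ?_ (subst_rename (V := extC (fun s => Tm V [] s) u)
      (W := fun s => Tm V [] s) (U := V) (Γ := []) (Δ := [u]) (Θ := [u])
      toCtx1 (liftS (V := fun s => Tm V [] s) (W := V) (Γ := []) (Δ := [])
        (fun _ x => x) u) m).symm
    refine subst_congr (fun t x => ?_) m
    cases x with
    | inl p =>
        refine (rename_rename (V := V) (W := extC V u) (U := V) (Γ := [])
          (Δ := []) (Θ := [u]) (fun s y => Sum.inl y) toCtx1 p).trans ?_
        exact rename_congr (fun _ _ => rfl) p
    | inr h => rfl
  fixp _ _ m := Tm.fixp m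
  fixp_natural := by intros; rfl
  fixp_mod := by intros; rfl
  tt _ := Tm.tt
  tt_natural := by intros; rfl
  tt_mod := by intros; rfl
  ff _ := Tm.ff
  ff_natural := by intros; rfl
  ff_mod := by intros; rfl
  num n _ := Tm.num n
  num_natural := by intros; rfl
  num_mod := by intros; rfl
  succ _ := Tm.succ
  succ_natural := by intros; rfl
  succ_mod := by intros; rfl
  pred _ := Tm.pred
  pred_natural := by intros; rfl
  pred_mod := by intros; rfl
  zero _ := Tm.zero
  zero_natural := by intros; rfl
  zero_mod := by intros; rfl
  condN _ := Tm.condN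
  condN_natural := by intros; rfl
  condN_mod := by intros; rfl
  condB _ := Tm.condB
  condB_natural := by intros; rfl
  condB_mod := by intros; rfl
  bot t _ := Tm.bot t
  bot_natural := by intros; rfl
  bot_mod := by intros; rfl

end PCFInit
namespace PCFInit

def pcfLift {V W : PcfTy → Type} (ρ : ∀ t, V t → W t) (u : PcfTy) :
    ∀ t, extC V u t → extC W u t :=
  fun t x => x.elim (fun v => Sum.inl (ρ t v)) Sum.inr

def pcfRename : ∀ {V W : PcfTy → Type}, (∀ t, V t → W t) → ∀ {t}, PCFTm V t → PCFTm W t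
  | _, _, ρ, _, .var x => .var (ρ _ x)
  | _, _, _, _, .bot t => .bot t
  | _, _, ρ, _, .app a b => .app (pcfRename ρ a) (pcfRename ρ b)
  | _, _, ρ, _, .lam (u := u) m => .lam (pcfRename (pcfLift ρ u) m)
  | _, _, ρ, _, .fixp m => .fixp (pcfRename ρ m)
  | _, _, _, _, .tt => .tt
  | _, _, _, _, .ff => .ff
  | _, _, _, _, .num n => .num n
  | _, _, _, _, .succ => .succ
  | _, _, _, _, .pred => .pred
  | _, _, _, _, .zero => .zero
  | _, _, _, _, .condN => .condN
  | _, _, _, _, .condB => .condB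

def toPCF {V : PcfTy → Type} : ∀ {Γ : List PcfTy} {t}, Tm V Γ t → PCFTm (ctx V Γ) t
  | _, _, .var x => .var x
  | _, _, .bot t => .bot t
  | _, _, .app a b => .app (toPCF a) (toPCF b)
  | _, _, .lam m => .lam (toPCF m)
  | _, _, .fixp m => .fixp (toPCF m)
  | _, _, .tt => .tt
  | _, _, .ff => .ff
  | _, _, .num n => .num n
  | _, _, .succ => .succ
  | _, _, .pred => .pred
  | _, _, .zero => .zero
  | _, _, .condN => .condN
  | _, _, .condB => .condB

def ofPCF : ∀ {V : PcfTy → Type} {t}, PCFTm V t → Tm V [] t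
  | _, _, .var x => .var x
  | _, _, .bot t => .bot t
  | _, _, .app a b => .app (ofPCF a) (ofPCF b)
  | _, _, .lam m => absT (ofPCF m)
  | _, _, .fixp m => .fixp (ofPCF m)
  | _, _, .tt => .tt
  | _, _, .ff => .ff
  | _, _, .num n => .num n
  | _, _, .succ => .succ
  | _, _, .pred => .pred
  | _, _, .zero => .zero
  | _, _, .condN => .condN
  | _, _, .condB => .condB

theorem pcfRename_id {V : PcfTy → Type} {t} (p : PCFTm V t) :
    ∀ (ρ : ∀ s, V s → V s), (∀ s x, ρ s x = x) → pcfRename ρ p = p := by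
  induction p with
  | var x => intro ρ h; exact congrArg PCFTm.var (h _ x)
  | app a b iha ihb =>
      intro ρ h
      show PCFTm.app _ _ = PCFTm.app _ _
      rw [iha ρ h, ihb ρ h]
  | lam m ih =>
      intro ρ h
      refine congrArg PCFTm.lam (ih _ (fun s x => ?_))
      cases x with
      | inl v => show Sum.inl (ρ s v) = Sum.inl v; rw [h]
      | inr hh => rfl
  | fixp m ih => intro ρ h; show PCFTm.fixp _ = PCFTm.fixp _; rw [ih ρ h]
  | _ => intro ρ h; rfl

theorem toPCF_rename {V : PcfTy → Type} {Γ : List PcfTy} {t} (m : Tm V Γ t) :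
    ∀ {W Δ} (ρ : ∀ s, ctx V Γ s → ctx W Δ s),
      toPCF (rename ρ m) = pcfRename ρ (toPCF m) := by
  induction m with
  | var x => intro W Δ ρ; rfl
  | app a b iha ihb =>
      intro W Δ ρ
      show PCFTm.app _ _ = PCFTm.app _ _
      rw [iha, ihb]
  | lam m ih =>
      intro W Δ ρ
      exact congrArg PCFTm.lam (ih _)
  | fixp m ih => intro W Δ ρ; show PCFTm.fixp _ = PCFTm.fixp _; rw [ih]
  | _ => intro W Δ ρ; rfl

def idc (V : PcfTy → Type) (Γ : List PcfTy) :
    ∀ s, ctx (ctx V Γ) [] s → ctx V Γ s := fun _ x => x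

theorem ofPCF_toPCF {V : PcfTy → Type} {Γ : List PcfTy} {t} (m : Tm V Γ t) :
    rename (idc V Γ) (ofPCF (toPCF m)) = m := by
  induction m with
  | var x => rfl
  | bot t => rfl
  | app a b iha ihb => show Tm.app _ _ = Tm.app _ _; rw [iha, ihb]
  | fixp m ih => show Tm.fixp _ = Tm.fixp _; rw [ih]
  | lam m ih =>
      rename_i Γ' u v
      refine congrArg Tm.lam ?_
      refine Eq.trans (rename_rename (V := extC (ctx V Γ') u) (W := ctx V Γ')
        (U := V) (Γ := []) (Δ := [u]) (Θ := u :: Γ') toCtx1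
        (liftR (idc V Γ') u) (ofPCF (toPCF m))) ?_
      refine Eq.trans (rename_congr (ρ' := idc V (u :: Γ')) (fun s x => ?_)
        (ofPCF (toPCF m))) ih
      cases x with
      | inl v => rfl
      | inr h => rfl
  | _ => rfl

theorem toPCF_ofPCF {V : PcfTy → Type} {t} (p : PCFTm V t) :
    toPCF (ofPCF p) = p := by
  induction p with
  | var x => rfl
  | bot t => rfl
  | app a b iha ihb => show PCFTm.app _ _ = PCFTm.app _ _; rw [iha, ihb]
  | fixp m ih => show PCFTm.fixp _ = PCFTm.fixp _; rw [ih]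
  | lam m ih =>
      rename_i V' u v
      refine congrArg PCFTm.lam ?_
      refine Eq.trans (toPCF_rename (ofPCF m) toCtx1) ?_
      rw [ih]
      exact pcfRename_id m _ (fun _ _ => rfl)
  | _ => rfl

def pcfEquiv (V : PcfTy → Type) (t : PcfTy) : Tm V [] t ≃ PCFTm V t where
  toFun := toPCF
  invFun := ofPCF
  left_inv m := (rename_id (V := V) (Γ := []) (idc V []) (fun _ _ => rfl)
    (ofPCF (toPCF m))).symm.trans (ofPCF_toPCF m)
  right_inv := toPCF_ofPCF

end PCFInit
namespace PCFInit

/-- The canonical map on sorts. -/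
def gI (R : PCFRep) : PcfTy → R.Sorts
  | .nat => R.nat
  | .bool => R.bool
  | .arr u v => R.arr (gI R u) (gI R v)

/-- Elementwise functoriality. -/
theorem mapP (R : PCFRep) {X Y Z : R.Sorts → Type} (f : X ⟶ Y) (g : Y ⟶ Z) {t}
    (x : R.str.P.obj X t) :
    R.str.P.map g t (R.str.P.map f t x) = R.str.P.map (f ≫ g) t x :=
  (ConcreteCategory.congr_hom (congrFun (R.str.P.toFunctor.map_comp f g) t) x).symm

/-- Elementwise naturality of the unit. -/
theorem etaP (R : PCFRep) {X Y : R.Sorts → Type} (f : X ⟶ Y) {t} (x : X t) :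
    R.str.P.map f t (R.str.P.η.app X t x) = R.str.P.η.app Y t (f t x) :=
  (ConcreteCategory.congr_hom (congrFun (R.str.P.η.naturality f) t) x).symm

/-- Elementwise naturality of the multiplication. -/
theorem muP (R : PCFRep) {X Y : R.Sorts → Type} (f : X ⟶ Y) {t}
    (x : R.str.P.obj (R.str.P.obj X) t) :
    R.str.P.map f t (R.str.P.μ.app X t x) =
      R.str.P.μ.app Y t (R.str.P.map (R.str.P.map f) t x) :=
  (ConcreteCategory.congr_hom (congrFun (R.str.P.μ.naturality f) t) x).symm

/-- Elementwise left unit law. -/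
theorem lunitP (R : PCFRep) {X : R.Sorts → Type} {t} (x : R.str.P.obj X t) :
    R.str.P.μ.app X t (R.str.P.η.app (R.str.P.obj X) t x) = x :=
  ConcreteCategory.congr_hom (congrFun (R.str.P.left_unit X) t) x

/-- Interpretation of PCF terms in a representation `R`. -/
def sem (R : PCFRep) {V : PcfTy → Type} :
    ∀ {Γ : List PcfTy} {t}, Tm V Γ t → R.str.P.obj (retypeObj (gI R) (ctx V Γ)) (gI R t)
  | Γ, t, .var x => R.str.P.η.app (retypeObj (gI R) (ctx V Γ)) (gI R t) ⟨⟨t, rfl⟩, x⟩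
  | _, _, .bot t => R.str.bot (gI R t) _
  | _, _, .app (u := u) (v := v) a b =>
      R.str.app (gI R u) (gI R v) _ (sem R a) (sem R b)
  | Γ, _, .lam (u := u) (v := v) m =>
      R.str.abs (gI R u) (gI R v) _
        (R.str.P.map (dC (gI R) (ctx V Γ) u) (gI R v) (sem R m))
  | _, _, .fixp (t := t) m => R.str.fixp (gI R t) _ (sem R m)
  | _, _, .tt => R.str.tt _
  | _, _, .ff => R.str.ff _
  | _, _, .num n => R.str.num n _
  | _, _, .succ => R.str.succ _
  | _, _, .pred => R.str.pred _
  | _, _, .zero => R.str.zero _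
  | _, _, .condN => R.str.condN _
  | _, _, .condB => R.str.condB _

end PCFInit
namespace PCFInit

example (R : PCFRep) {V : PcfTy → Type} : sem R (Tm.tt (V := V) (Γ := [])) = R.str.tt _ := rfl

theorem sem_rename (R : PCFRep) {V : PcfTy → Type} {Γ : List PcfTy} {t}
    (m : Tm V Γ t) :
    ∀ {W Δ} (ρ : ∀ s, ctx V Γ s → ctx W Δ s),
      sem R (rename ρ m) =
        R.str.P.map (retypeMap (gI R) (toH ρ)) (gI R t) (sem R m) := by
  induction m with
  | var x =>
      intro W Δ ρ
      exact (etaP R (retypeMap (gI R) (toH ρ)) ⟨⟨_, rfl⟩, x⟩).symm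
  | bot t =>
      intro W Δ ρ
      exact (R.str.bot_natural (gI R t) (retypeMap (gI R) (toH ρ))).symm
  | app a b iha ihb =>
      rename_i u v
      intro W Δ ρ
      show R.str.app (gI R u) (gI R v) _ (sem R (rename ρ a)) (sem R (rename ρ b)) = _
      rw [iha, ihb]
      exact R.str.app_natural (gI R u) (gI R v) (retypeMap (gI R) (toH ρ)) (sem R a) (sem R b)
  | lam m ih =>
      rename_i Γ' u v
      intro W Δ ρ
      show R.str.abs (gI R u) (gI R v) _
          (R.str.P.map (dC (gI R) (ctx W Δ) u) (gI R v) (sem R (rename (liftR ρ u) m))) = _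
      rw [ih (liftR ρ u)]
      erw [mapP R (retypeMap (gI R) (toH (liftR ρ u))) (dC (gI R) (ctx W Δ) u) (sem R m)]
      have hcomp : retypeMap (gI R) (toH (liftR ρ u)) ≫ dC (gI R) (ctx W Δ) u =
          dC (gI R) (ctx V Γ') u ≫ extCMap (retypeMap (gI R) (toH ρ)) (gI R u) := by
        funext t'; refine ConcreteCategory.hom_ext _ _ fun p => ?_
        rcases p with ⟨⟨s, hs⟩, x⟩
        cases x <;> rfl
      rw [hcomp]
      erw [← mapP R (dC (gI R) (ctx V Γ') u) (extCMap (retypeMap (gI R) (toH ρ)) (gI R u))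
        (sem R m)]
      exact R.str.abs_natural (gI R u) (gI R v) (retypeMap (gI R) (toH ρ))
        (R.str.P.map (dC (gI R) (ctx V Γ') u) (gI R v) (sem R m))
  | fixp m ih =>
      rename_i t'
      intro W Δ ρ
      show R.str.fixp (gI R t') _ (sem R (rename ρ m)) = _
      rw [ih]
      exact R.str.fixp_natural (gI R t') (retypeMap (gI R) (toH ρ)) (sem R m)
  | tt => intro W Δ ρ; exact (R.str.tt_natural (retypeMap (gI R) (toH ρ))).symm
  | ff => intro W Δ ρ; exact (R.str.ff_natural (retypeMap (gI R) (toH ρ))).symm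
  | num n => intro W Δ ρ; exact (R.str.num_natural n (retypeMap (gI R) (toH ρ))).symm
  | succ => intro W Δ ρ; exact (R.str.succ_natural (retypeMap (gI R) (toH ρ))).symm
  | pred => intro W Δ ρ; exact (R.str.pred_natural (retypeMap (gI R) (toH ρ))).symm
  | zero => intro W Δ ρ; exact (R.str.zero_natural (retypeMap (gI R) (toH ρ))).symm
  | condN => intro W Δ ρ; exact (R.str.condN_natural (retypeMap (gI R) (toH ρ))).symm
  | condB => intro W Δ ρ; exact (R.str.condB_natural (retypeMap (gI R) (toH ρ))).symm

end PCFInit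
namespace PCFInit

/-- Interpretation of a substitution. -/
def semS (R : PCFRep) {V W : PcfTy → Type} {Γ Δ : List PcfTy}
    (σ : ∀ s, ctx V Γ s → Tm W Δ s) :
    retypeObj (gI R) (ctx V Γ) ⟶ R.str.P.obj (retypeObj (gI R) (ctx W Δ)) :=
  fun t' => TypeCat.ofHom fun p =>
    cast (congrArg (R.str.P.obj (retypeObj (gI R) (ctx W Δ))) p.1.2)
      (sem R (σ p.1.1 p.2))

theorem sem_subst (R : PCFRep) {V : PcfTy → Type} {Γ : List PcfTy} {t}
    (m : Tm V Γ t) :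
    ∀ {W Δ} (σ : ∀ s, ctx V Γ s → Tm W Δ s),
      sem R (subst σ m) =
        R.str.P.μ.app (retypeObj (gI R) (ctx W Δ)) (gI R t)
          (R.str.P.map (semS R σ) (gI R t) (sem R m)) := by
  induction m with
  | var x =>
      intro W Δ σ
      exact ((congrArg (R.str.P.μ.app (retypeObj (gI R) (ctx W Δ)) (gI R _))
        (etaP R (semS R σ) ⟨⟨_, rfl⟩, x⟩)).trans (lunitP R _)).symm
  | bot t =>
      intro W Δ σ
      exact (R.str.bot_mod (gI R t) _).symm.trans
        (congrArg (R.str.P.μ.app _ (gI R t)) (R.str.bot_natural (gI R t) (semS R σ)).symm)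
  | app a b iha ihb =>
      rename_i u v
      intro W Δ σ
      calc sem R (subst σ (a.app b))
          = R.str.app (gI R u) (gI R v) _ (sem R (subst σ a)) (sem R (subst σ b)) := rfl
        _ = R.str.app (gI R u) (gI R v) _
              (R.str.P.μ.app _ (gI R (u.arr v)) (R.str.P.map (semS R σ) _ (sem R a)))
              (R.str.P.μ.app _ (gI R u) (R.str.P.map (semS R σ) _ (sem R b))) := by
            rw [iha, ihb]
        _ = R.str.P.μ.app _ (gI R v)
              (R.str.app (gI R u) (gI R v) _
                (R.str.P.map (semS R σ) _ (sem R a))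
                (R.str.P.map (semS R σ) _ (sem R b))) :=
            R.str.app_mod (gI R u) (gI R v) _ _ _
        _ = R.str.P.μ.app _ (gI R v)
              (R.str.P.map (semS R σ) _ (R.str.app (gI R u) (gI R v) _ (sem R a) (sem R b))) :=
            congrArg (R.str.P.μ.app _ (gI R v))
              (R.str.app_natural (gI R u) (gI R v) (semS R σ) (sem R a) (sem R b))
        _ = _ := rfl
  | fixp m ih =>
      rename_i t'
      intro W Δ σ
      calc sem R (subst σ m.fixp)
          = R.str.fixp (gI R t') _ (sem R (subst σ m)) := rfl
        _ = R.str.fixp (gI R t') _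
              (R.str.P.μ.app _ (gI R (t'.arr t')) (R.str.P.map (semS R σ) _ (sem R m))) := by
            rw [ih]
        _ = R.str.P.μ.app _ (gI R t')
              (R.str.fixp (gI R t') _ (R.str.P.map (semS R σ) _ (sem R m))) :=
            R.str.fixp_mod (gI R t') _ _
        _ = R.str.P.μ.app _ (gI R t')
              (R.str.P.map (semS R σ) _ (R.str.fixp (gI R t') _ (sem R m))) :=
            congrArg (R.str.P.μ.app _ (gI R t'))
              (R.str.fixp_natural (gI R t') (semS R σ) (sem R m))
        _ = _ := rfl
  | lam m ih =>
      rename_i Γ' u v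
      intro W Δ σ
      have hkey : semS R (liftS σ u) ≫ R.str.P.map (dC (gI R) (ctx W Δ) u) =
          (dC (gI R) (ctx V Γ') u ≫ extCMap (semS R σ) (gI R u)) ≫
            gammaC R.str.P (gI R u) (retypeObj (gI R) (ctx W Δ)) := by
        funext t'; refine ConcreteCategory.hom_ext _ _ fun p => ?_
        rcases p with ⟨⟨s, hs⟩, x⟩
        cases hs
        cases x with
        | inl y =>
            show R.str.P.map (dC (gI R) (ctx W Δ) u) _ (sem R (rename (wk u) (σ s y))) = _
            rw [sem_rename R (σ s y) (wk u)]
            erw [mapP R (retypeMap (gI R) (toH (wk u))) (dC (gI R) (ctx W Δ) u)]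
            have h2 : retypeMap (gI R) (toH (wk (W := W) (Δ := Δ) u)) ≫ dC (gI R) (ctx W Δ) u =
                (toH fun t' z => (Sum.inl z : extC (retypeObj (gI R) (ctx W Δ)) (gI R u) t')) := by
              funext t'; refine ConcreteCategory.hom_ext _ _ fun q => ?_
              rcases q with ⟨⟨s', hs'⟩, y'⟩
              rfl
            rw [h2]
            rfl
        | inr h =>
            show R.str.P.map (dC (gI R) (ctx W Δ) u) _
                (R.str.P.η.app _ _ ⟨⟨s, rfl⟩, Sum.inr h⟩) = _
            rw [etaP R (dC (gI R) (ctx W Δ) u) ⟨⟨s, rfl⟩, Sum.inr h⟩]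
            rfl
      calc (id (sem R (subst σ m.lam)) : R.str.P.obj (retypeObj (gI R) (ctx W Δ)) (R.arr (gI R u) (gI R v)))
          = R.str.abs (gI R u) (gI R v) _
              (R.str.P.map (dC (gI R) (ctx W Δ) u) (gI R v)
                (sem R (subst (liftS σ u) m))) := rfl
        _ = R.str.abs (gI R u) (gI R v) _
              (R.str.P.map (dC (gI R) (ctx W Δ) u) (gI R v)
                (R.str.P.μ.app _ (gI R v) (R.str.P.map (semS R (liftS σ u)) _ (sem R m)))) := by
            rw [ih (liftS σ u)]; rfl
        _ = R.str.abs (gI R u) (gI R v) _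
              (R.str.P.μ.app _ (gI R v)
                (R.str.P.map (R.str.P.map (dC (gI R) (ctx W Δ) u)) _
                  (R.str.P.map (semS R (liftS σ u)) _ (sem R m)))) := by
            erw [muP R (dC (gI R) (ctx W Δ) u)]
        _ = R.str.abs (gI R u) (gI R v) _
              (R.str.P.μ.app _ (gI R v)
                (R.str.P.map (semS R (liftS σ u) ≫ R.str.P.map (dC (gI R) (ctx W Δ) u)) _
                  (sem R m))) := by
            erw [mapP R (semS R (liftS σ u)) (R.str.P.map (dC (gI R) (ctx W Δ) u))]
        _ = R.str.abs (gI R u) (gI R v) _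
              (R.str.P.μ.app _ (gI R v)
                (R.str.P.map ((dC (gI R) (ctx V Γ') u ≫ extCMap (semS R σ) (gI R u)) ≫
                  gammaC R.str.P (gI R u) (retypeObj (gI R) (ctx W Δ))) _ (sem R m))) := by
            rw [hkey]; rfl
        _ = R.str.abs (gI R u) (gI R v) _
              (R.str.P.μ.app _ (gI R v)
                (R.str.P.map (gammaC R.str.P (gI R u) (retypeObj (gI R) (ctx W Δ))) _
                  (R.str.P.map (dC (gI R) (ctx V Γ') u ≫ extCMap (semS R σ) (gI R u)) _
                    (sem R m)))) := by
            erw [mapP R (dC (gI R) (ctx V Γ') u ≫ extCMap (semS R σ) (gI R u))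
              (gammaC R.str.P (gI R u) (retypeObj (gI R) (ctx W Δ)))]
        _ = R.str.abs (gI R u) (gI R v) _
              (R.str.P.μ.app _ (gI R v)
                (R.str.P.map (gammaC R.str.P (gI R u) (retypeObj (gI R) (ctx W Δ))) _
                  (R.str.P.map (extCMap (semS R σ) (gI R u)) _
                    (R.str.P.map (dC (gI R) (ctx V Γ') u) _ (sem R m))))) := by
            erw [mapP R (dC (gI R) (ctx V Γ') u) (extCMap (semS R σ) (gI R u))]
        _ = R.str.P.μ.app _ (R.arr (gI R u) (gI R v))
              (R.str.abs (gI R u) (gI R v) _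
                (R.str.P.map (extCMap (semS R σ) (gI R u)) _
                  (R.str.P.map (dC (gI R) (ctx V Γ') u) _ (sem R m)))) :=
            R.str.abs_mod (gI R u) (gI R v) _ _
        _ = R.str.P.μ.app _ (R.arr (gI R u) (gI R v))
              (R.str.P.map (semS R σ) _
                (R.str.abs (gI R u) (gI R v) _
                  (R.str.P.map (dC (gI R) (ctx V Γ') u) _ (sem R m)))) :=
            congrArg (R.str.P.μ.app _ (R.arr (gI R u) (gI R v)))
              (R.str.abs_natural (gI R u) (gI R v) (semS R σ) _)
        _ = _ := rfl
  | tt =>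
      intro W Δ σ
      exact (R.str.tt_mod _).symm.trans
        (congrArg (R.str.P.μ.app _ _) (R.str.tt_natural (semS R σ)).symm)
  | ff =>
      intro W Δ σ
      exact (R.str.ff_mod _).symm.trans
        (congrArg (R.str.P.μ.app _ _) (R.str.ff_natural (semS R σ)).symm)
  | num n =>
      intro W Δ σ
      exact (R.str.num_mod n _).symm.trans
        (congrArg (R.str.P.μ.app _ _) (R.str.num_natural n (semS R σ)).symm)
  | succ =>
      intro W Δ σ
      exact (R.str.succ_mod _).symm.trans
        (congrArg (R.str.P.μ.app _ _) (R.str.succ_natural (semS R σ)).symm)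
  | pred =>
      intro W Δ σ
      exact (R.str.pred_mod _).symm.trans
        (congrArg (R.str.P.μ.app _ _) (R.str.pred_natural (semS R σ)).symm)
  | zero =>
      intro W Δ σ
      exact (R.str.zero_mod _).symm.trans
        (congrArg (R.str.P.μ.app _ _) (R.str.zero_natural (semS R σ)).symm)
  | condN =>
      intro W Δ σ
      exact (R.str.condN_mod _).symm.trans
        (congrArg (R.str.P.μ.app _ _) (R.str.condN_natural (semS R σ)).symm)
  | condB =>
      intro W Δ σ
      exact (R.str.condB_mod _).symm.trans
        (congrArg (R.str.P.μ.app _ _) (R.str.condB_natural (semS R σ)).symm)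

end PCFInit
namespace PCFInit

def pcfRep : PCFRep := ⟨PcfTy, PcfTy.arr, PcfTy.bool, PcfTy.nat, pcfR₀⟩

/-- The underlying family map of the canonical morphism. -/
def fT (R : PCFRep) (V : PcfTy → Type) :
    retypeObj (gI R) (pcfR₀.P.obj V) ⟶ R.str.P.obj (retypeObj (gI R) V) :=
  fun _ => TypeCat.ofHom fun p =>
    cast (congrArg (R.str.P.obj (retypeObj (gI R) V)) p.1.2) (sem R p.2)

def homTo (R : PCFRep) : PCFRepHom pcfRep R where
  g := gI R
  g_arr _ _ := rfl
  g_bool := rfl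
  g_nat := rfl
  f := fT R
  f_natural {V W} k := by
    funext t'; refine ConcreteCategory.hom_ext _ _ fun p => ?_
    rcases p with ⟨⟨s, hs⟩, m⟩
    cases hs
    exact sem_rename R (V := V) (Γ := []) m (W := W) (Δ := []) (fun a x => k a x)
  f_unit V := by
    funext t'; refine ConcreteCategory.hom_ext _ _ fun p => ?_
    rcases p with ⟨⟨s, hs⟩, v⟩
    cases hs
    rfl
  f_mul V := by
    funext t'; refine ConcreteCategory.hom_ext _ _ fun p => ?_
    rcases p with ⟨⟨s, hs⟩, m⟩
    cases hs
    exact sem_subst R (V := fun s => Tm V [] s) (Γ := []) m (W := V) (Δ := []) (fun a x => x)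
  app_compat u v V a b :=
    (congrArg (fun z => R.str.app (gI R u) (gI R v) (retypeObj (gI R) V) z
      (fT R V (gI R u) ⟨⟨u, rfl⟩, b⟩))
      (eq_of_heq (cast_heq _ (fT R V (gI R (u.arr v)) ⟨⟨u.arr v, rfl⟩, a⟩)))).symm
  abs_compat u v V m := by
    have h3 : retypeMap (gI R) (toH (toCtx1 (V := V) (u := u))) ≫ dC (gI R) (ctx V []) u =
        dC (gI R) V u := by
      funext t'; refine ConcreteCategory.hom_ext _ _ fun q => ?_
      rcases q with ⟨⟨s, hs⟩, x⟩
      cases x <;> rfl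
    refine Eq.trans ?_ (eq_of_heq (cast_heq _ _)).symm
    show R.str.abs (gI R u) (gI R v) _
        (R.str.P.map (dC (gI R) (ctx V []) u) (gI R v) (sem R (rename toCtx1 m))) = _
    erw [sem_rename R m toCtx1,
      mapP R (retypeMap (gI R) (toH toCtx1)) (dC (gI R) (ctx V []) u), h3]
    rfl
  fixp_compat t V m :=
    (congrArg (R.str.fixp (gI R t) (retypeObj (gI R) V))
      (eq_of_heq (cast_heq _ (fT R V (gI R (t.arr t)) ⟨⟨t.arr t, rfl⟩, m⟩)))).symm
  tt_compat V := (eq_of_heq (cast_heq _ (R.str.tt (retypeObj (gI R) V)))).symm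
  ff_compat V := (eq_of_heq (cast_heq _ (R.str.ff (retypeObj (gI R) V)))).symm
  num_compat n V := (eq_of_heq (cast_heq _ (R.str.num n (retypeObj (gI R) V)))).symm
  succ_compat V := (eq_of_heq (cast_heq _ (R.str.succ (retypeObj (gI R) V)))).symm
  pred_compat V := (eq_of_heq (cast_heq _ (R.str.pred (retypeObj (gI R) V)))).symm
  zero_compat V := (eq_of_heq (cast_heq _ (R.str.zero (retypeObj (gI R) V)))).symm
  condN_compat V := (eq_of_heq (cast_heq _ (R.str.condN (retypeObj (gI R) V)))).symm
  condB_compat V := (eq_of_heq (cast_heq _ (R.str.condB (retypeObj (gI R) V)))).symm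
  bot_compat t V := rfl

end PCFInit
namespace PCFInit

theorem homext {X Y : PCFRep} (a b : PCFRepHom X Y) (hg : a.g = b.g)
    (hf : HEq a.f b.f) : a = b := by
  cases a
  cases b
  dsimp at hg hf
  subst hg
  have hf' := eq_of_heq hf
  subst hf'
  rfl

/-- View a term in context `Γ` as a closed term over the extended family. -/
def emb {V : PcfTy → Type} {Γ : List PcfTy} {t} (m : Tm V Γ t) :
    Tm (ctx V Γ) [] t :=
  rename (V := V) (W := ctx V Γ) (Γ := Γ) (Δ := []) (fun _ x => x) m

theorem hom_unique (R : PCFRep) (h : PCFRepHom pcfRep R) : h = homTo R := by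
  obtain ⟨g, g_arr, g_bool, g_nat, f, f_natural, f_unit, f_mul, app_c, abs_c, fixp_c,
    tt_c, ff_c, num_c, succ_c, pred_c, zero_c, condN_c, condB_c, bot_c⟩ := h
  have hg : g = gI R := by
    funext s
    induction s with
    | nat => exact g_nat
    | bool => exact g_bool
    | arr u v ihu ihv =>
        refine (g_arr u v).trans ?_
        rw [ihu, ihv]
        rfl
  subst hg
  have key : ∀ (V : PcfTy → Type) (Γ : List PcfTy) (t : PcfTy) (m : Tm V Γ t),
      f (ctx V Γ) (gI R t) ⟨⟨t, rfl⟩, emb m⟩ = sem R (emb m) := by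
    intro V Γ t m
    induction m with
    | var x =>
        rename_i Γ' t''
        exact ConcreteCategory.congr_hom (congrFun (f_unit (ctx V Γ')) (gI R t'')) ⟨⟨t'', rfl⟩, x⟩
    | bot t'' =>
        rename_i Γ'
        exact bot_c t'' (ctx V Γ')
    | app a b iha ihb =>
        rename_i Γ' u v
        refine (app_c u v (ctx V Γ') (emb a) (emb b)).trans ?_
        exact congrArg₂ (fun z w => R.str.app (gI R u) (gI R v) (retypeObj (gI R) (ctx V Γ')) z w)
          ((eq_of_heq (cast_heq _ _)).trans iha) ihb
    | lam m ihm =>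
        rename_i Γ' u v
        have hl : emb (Tm.lam m) = absT (emb m) := by
          refine congrArg Tm.lam ?_
          refine Eq.trans (rename_congr (fun s x => ?_) m)
            (rename_rename (V := V) (W := ctx V (u :: Γ')) (U := ctx V Γ')
              (Γ := u :: Γ') (Δ := []) (Θ := [u]) (fun _ x => x) toCtx1 m).symm
          cases x <;> rfl
        refine (congrArg (fun z => f (ctx V Γ') (gI R (u.arr v)) ⟨⟨u.arr v, rfl⟩, z⟩) hl).trans ?_
        refine (abs_c u v (ctx V Γ') (emb m)).trans ?_
        refine (eq_of_heq (cast_heq _ _)).trans ?_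
        refine Eq.trans (congrArg (fun z => R.str.abs (gI R u) (gI R v) (retypeObj (gI R) (ctx V Γ'))
          (R.str.P.map (dC (gI R) (ctx V Γ') u) (gI R v) z)) ihm) ?_
        refine congrArg (fun z => R.str.abs (gI R u) (gI R v) (retypeObj (gI R) (ctx V Γ'))
          (R.str.P.map (dC (gI R) (ctx V Γ') u) (gI R v) z)) ?_
        have hmap : retypeMap (gI R)
              (toH fun (s : PcfTy) (x : ctx V (u :: Γ') s) => (x : ctx (ctx V (u :: Γ')) [] s)) =
            retypeMap (gI R)
              (toH (liftR (V := V) (W := ctx V Γ') (Γ := Γ') (Δ := []) (fun _ x => x) u)) := by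
          funext t'; refine ConcreteCategory.hom_ext _ _ fun q => ?_
          rcases q with ⟨⟨s, hs⟩, x⟩
          cases x <;> rfl
        exact (sem_rename R (V := V) (Γ := u :: Γ') m (W := ctx V (u :: Γ')) (Δ := [])
            (fun _ x => x)).trans
          ((congrArg (fun q => R.str.P.map q (gI R v) (sem R m)) hmap).trans
            (sem_rename R (V := V) (Γ := u :: Γ') m (W := ctx V Γ') (Δ := [u])
              (liftR (V := V) (W := ctx V Γ') (Γ := Γ') (Δ := []) (fun _ x => x) u)).symm)
    | fixp m ihm =>
        rename_i Γ' t''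
        refine (fixp_c t'' (ctx V Γ') (emb m)).trans ?_
        exact congrArg (R.str.fixp (gI R t'') (retypeObj (gI R) (ctx V Γ')))
          ((eq_of_heq (cast_heq _ _)).trans ihm)
    | tt => rename_i Γ'; exact (tt_c (ctx V Γ')).trans (eq_of_heq (cast_heq _ _))
    | ff => rename_i Γ'; exact (ff_c (ctx V Γ')).trans (eq_of_heq (cast_heq _ _))
    | num n => rename_i Γ'; exact (num_c n (ctx V Γ')).trans (eq_of_heq (cast_heq _ _))
    | succ => rename_i Γ'; exact (succ_c (ctx V Γ')).trans (eq_of_heq (cast_heq _ _))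
    | pred => rename_i Γ'; exact (pred_c (ctx V Γ')).trans (eq_of_heq (cast_heq _ _))
    | zero => rename_i Γ'; exact (zero_c (ctx V Γ')).trans (eq_of_heq (cast_heq _ _))
    | condN => rename_i Γ'; exact (condN_c (ctx V Γ')).trans (eq_of_heq (cast_heq _ _))
    | condB => rename_i Γ'; exact (condB_c (ctx V Γ')).trans (eq_of_heq (cast_heq _ _))
  have hf : f = fT R := by
    funext V t'; refine ConcreteCategory.hom_ext _ _ fun p => ?_
    rcases p with ⟨⟨s, hs⟩, m⟩
    cases hs
    have h1 : emb (Γ := []) m = m :=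
      rename_id (V := V) (Γ := []) (fun _ x => x) (fun _ _ => rfl) m
    refine Eq.trans (congrArg (fun z => f V (gI R s) ⟨⟨s, rfl⟩, z⟩) h1.symm) ?_
    refine (key V [] s m).trans ?_
    exact congrArg (fun z => sem R z) h1
  exact homext _ _ rfl (heq_of_eq hf)

end PCFInit
namespace PCFInit

theorem toPCF_absT {V : PcfTy → Type} {u v : PcfTy} (m : Tm (extC V u) [] v) :
    toPCF (absT m) = PCFTm.lam (toPCF m) :=
  congrArg PCFTm.lam ((toPCF_rename m toCtx1).trans
    (pcfRename_id (toPCF m) toCtx1 (fun _ _ => rfl)))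

end PCFInit


/-- The category of representations of PCF has an initial object: its sorts are the
PCF types `T_PCF ::= Nat | Bool | T_PCF ⇒ T_PCF`, its monad is the intrinsically typed
PCF term monad, and its representation structure is given by the syntactic
constructors (the monad unit being the variables-as-terms constructor). -/
theorem pcfRep_initial :
    ∃ R₀ : PCFRepOn PcfTy PcfTy.arr PcfTy.bool PcfTy.nat,
      (∀ R : PCFRep,
        ∃! _ : PCFRepHom ⟨PcfTy, PcfTy.arr, PcfTy.bool, PcfTy.nat, R₀⟩ R, True) ∧
      ∃ e : ∀ (V : PcfTy → Type) (t : PcfTy), R₀.P.obj V t ≃ PCFTm V t,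
        (∀ (V : PcfTy → Type) (t : PcfTy) (v : V t),
          e V t (R₀.P.η.app V t v) = .var v) ∧
        (∀ (u v : PcfTy) (V : PcfTy → Type) (a : R₀.P.obj V (PcfTy.arr u v))
            (b : R₀.P.obj V u),
          e V v (R₀.app u v V a b) = .app (e V (PcfTy.arr u v) a) (e V u b)) ∧
        (∀ (u v : PcfTy) (V : PcfTy → Type) (m : R₀.P.obj (extC V u) v),
          e V (PcfTy.arr u v) (R₀.abs u v V m) = .lam (e (extC V u) v m)) ∧
        (∀ (t : PcfTy) (V : PcfTy → Type) (m : R₀.P.obj V (PcfTy.arr t t)),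
          e V t (R₀.fixp t V m) = .fixp (e V (PcfTy.arr t t) m)) ∧
        (∀ V : PcfTy → Type, e V PcfTy.bool (R₀.tt V) = .tt) ∧
        (∀ V : PcfTy → Type, e V PcfTy.bool (R₀.ff V) = .ff) ∧
        (∀ (n : ℕ) (V : PcfTy → Type), e V PcfTy.nat (R₀.num n V) = .num n) ∧
        (∀ V : PcfTy → Type,
          e V (PcfTy.arr PcfTy.nat PcfTy.nat) (R₀.succ V) = .succ) ∧
        (∀ V : PcfTy → Type,
          e V (PcfTy.arr PcfTy.nat PcfTy.nat) (R₀.pred V) = .pred) ∧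
        (∀ V : PcfTy → Type,
          e V (PcfTy.arr PcfTy.nat PcfTy.bool) (R₀.zero V) = .zero) ∧
        (∀ V : PcfTy → Type,
          e V (PcfTy.arr PcfTy.bool (PcfTy.arr PcfTy.nat
            (PcfTy.arr PcfTy.nat PcfTy.nat))) (R₀.condN V) = .condN) ∧
        (∀ V : PcfTy → Type,
          e V (PcfTy.arr PcfTy.bool (PcfTy.arr PcfTy.bool
            (PcfTy.arr PcfTy.bool PcfTy.bool))) (R₀.condB V) = .condB) ∧
        (∀ (t : PcfTy) (V : PcfTy → Type), e V t (R₀.bot t V) = .bot t) := by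
  refine ⟨PCFInit.pcfR₀, fun R => ⟨PCFInit.homTo R, trivial, fun h _ => PCFInit.hom_unique R h⟩,
    PCFInit.pcfEquiv, ?_, ?_, ?_, ?_, ?_, ?_, ?_, ?_, ?_, ?_, ?_, ?_, ?_⟩
  · intro V t v; rfl
  · intro u v V a b; rfl
  · intro u v V m; exact PCFInit.toPCF_absT m
  · intro t V m; rfl
  · intro V; rfl
  · intro V; rfl
  · intro n V; rfl
  · intro V; rfl
  · intro V; rfl
  · intro V; rfl
  · intro V; rfl
  · intro V; rfl
  · intro t V; rfl
end
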